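/- For each i ∈ {0,1,2}, the clone Clo(d_i) generated by the operation d_i on {0,1,2} is minor-equivalent to 𝒵₂, the clone on {0,1} of all operations preserving {(x,y,z,w) ∈ {0,1}⁴ : w = x+y+z mod 2}, {0}, and {1}; that is, there exist minion homomorphisms from Clo(d_i) to 𝒵₂ and from 𝒵₂ to Clo(d_i). Here d_i(x,y,z) equals the minority value of x,y,z if at most two distinct values occur among x,y,z (d_i(x,y,y) = d_i(y,x,y) = d_i(y,y,x) = x), and d_i(x,y,z) = i if x,y,z are pairwise distinct. -/

import Mathlib

/-- `f` preserves the `k`-ary relation `R`. -/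
def Preserves {A : Type} {n k : ℕ} (f : (Fin n → A) → A) (R : Set (Fin k → A)) : Prop :=
  ∀ r : Fin n → Fin k → A, (∀ i, r i ∈ R) → (fun j => f fun i => r i j) ∈ R

/-- A family of operations on `A`, indexed so that `C n` are the `(n+1)`-ary operations. -/
abbrev Ops (A : Type) := ∀ n : ℕ, Set ((Fin (n + 1) → A) → A)

/-- `C` is a clone: it contains all projections and is closed under composition. -/
structure IsClone {A : Type} (C : Ops A) : Prop where
  proj : ∀ (n : ℕ) (i : Fin (n + 1)), (fun x => x i) ∈ C n
  comp : ∀ (n m : ℕ) (f : (Fin (n + 1) → A) → A) (g : Fin (n + 1) → (Fin (m + 1) → A) → A),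
      f ∈ C n → (∀ i, g i ∈ C m) → (fun x => f fun i => g i x) ∈ C m

/-- The minor of `f` along `σ`. -/
def Minor {A : Type} {n r : ℕ} (f : (Fin n → A) → A) (σ : Fin n → Fin r) :
    (Fin r → A) → A := fun x => f (x ∘ σ)

/-- `ξ` is a minion homomorphism from `C` to `D`: it maps members of `C` to members of `D`
and commutes with taking minors (on members of `C`). -/
def IsMinionHom {A B : Type} (C : Ops A) (D : Ops B)
    (ξ : ∀ n : ℕ, ((Fin (n + 1) → A) → A) → ((Fin (n + 1) → B) → B)) : Prop :=
  (∀ n f, f ∈ C n → ξ n f ∈ D n) ∧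
    ∀ (n r : ℕ) (f : (Fin (n + 1) → A) → A) (σ : Fin (n + 1) → Fin (r + 1)),
      f ∈ C n → ξ r (Minor f σ) = Minor (ξ n f) σ

/-- There exists a minion homomorphism from `C` to `D`. -/
def MinorLE {A B : Type} (C : Ops A) (D : Ops B) : Prop := ∃ ξ, IsMinionHom C D ξ

/-- `C` and `D` are minor-equivalent. -/
def MinorEquiv {A B : Type} (C : Ops A) (D : Ops B) : Prop := MinorLE C D ∧ MinorLE D C

/-- A subset of `A` viewed as a unary relation. -/
def unRel {A : Type} (s : Set A) : Set (Fin 1 → A) := {t | t 0 ∈ s}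

def psi2 : Set (Fin 2 → Fin 3) :=
  {t | (t 0, t 1) ∈ ({(0, 1), (1, 0), (2, 2)} : Set (Fin 3 × Fin 3))}

def psi2' : Set (Fin 2 → Fin 3) :=
  {t | (t 0, t 1) ∈ ({(0, 1), (1, 0)} : Set (Fin 3 × Fin 3))}

def phi : Set (Fin 2 → Fin 3) :=
  {t | (t 0, t 1) ∈ ({(0, 1), (1, 2), (2, 0)} : Set (Fin 3 × Fin 3))}

def mu2 : Set (Fin 2 → Fin 3) :=
  {t | (t 0, t 1) ∈ ({(0, 0), (1, 1), (2, 2), (0, 1), (1, 0)} : Set (Fin 3 × Fin 3))}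

def rho2 : Set (Fin 2 → Fin 3) :=
  {t | (t 0, t 1) ∈ ({(0, 2), (1, 2), (2, 0), (2, 1)} : Set (Fin 3 × Fin 3))}

/-- The minority value of `x, y, z` when at most two distinct values occur
(and `x` if all three are distinct). -/
def mino {A : Type} [DecidableEq A] (x y z : A) : A :=
  if x = y then z else if x = z then y else x

/-- The relation `T_i' = {(x,y,z,min(x,y,z)) : x,y,z ≠ i}`. -/
def Tprime (i : Fin 3) : Set (Fin 4 → Fin 3) :=
  {t | t 0 ≠ i ∧ t 1 ≠ i ∧ t 2 ≠ i ∧ t 3 = mino (t 0) (t 1) (t 2)}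

/-- The relation `T₂ = T₂' ∪ {(2,2,2,2)}`. -/
def T2rel : Set (Fin 4 → Fin 3) := insert (fun _ => 2) (Tprime 2)

/-- The relation `T = {(x,y,z,x-y+z mod 3)}`. -/
def Trel : Set (Fin 4 → Fin 3) := {t | t 3 = t 0 - t 1 + t 2}

def neqRel : Set (Fin 2 → Fin 2) := {t | t 0 ≠ t 1}

/-- The relation `{(x,y,z,w) ∈ {0,1}⁴ : w = x+y+z mod 2}`. -/
def Z2rel : Set (Fin 4 → Fin 2) := {t | t 3 = t 0 + t 1 + t 2}

/-- `ℐ₂ = Pol({0},{1})` on `{0,1}`. -/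
def CloneI2 : Ops (Fin 2) := fun _ =>
  {f | Preserves f (unRel {0}) ∧ Preserves f (unRel {1})}

/-- `𝒞₂ = Pol(≠,{0},{1})` on `{0,1}`. -/
def CloneC2 : Ops (Fin 2) := fun _ =>
  {f | Preserves f neqRel ∧ Preserves f (unRel {0}) ∧ Preserves f (unRel {1})}

/-- `𝒵₂ = Pol({(x,y,z,w) : w = x+y+z mod 2},{0},{1})` on `{0,1}`. -/
def CloneZ2 : Ops (Fin 2) := fun _ =>
  {f | Preserves f Z2rel ∧ Preserves f (unRel {0}) ∧ Preserves f (unRel {1})}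

/-- The operation `d_i`: minority on triples with at most two distinct values, and
constant value `i` on triples of pairwise distinct values. -/
def dOp (i : Fin 3) : (Fin 3 → Fin 3) → Fin 3 := fun x =>
  if x 0 ≠ x 1 ∧ x 0 ≠ x 2 ∧ x 1 ≠ x 2 then i else mino (x 0) (x 1) (x 2)

/-- The clone generated by a single `(k+1)`-ary operation `g`: the smallest clone
containing `g`. -/
def CloGen {A : Type} {k : ℕ} (g : (Fin (k + 1) → A) → A) : Ops A :=
  fun n => {f | ∀ D : Ops A, IsClone D → g ∈ D k → f ∈ D n}
/-! ### Auxiliary lemmas -/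

lemma preserves_proj {A : Type} {n k : ℕ} (i : Fin n) (R : Set (Fin k → A)) :
    Preserves (fun x : Fin n → A => x i) R := fun r hr => hr i

lemma preserves_comp {A : Type} {n m k : ℕ} (f : (Fin n → A) → A)
    (g : Fin n → (Fin m → A) → A) (R : Set (Fin k → A))
    (hf : Preserves f R) (hg : ∀ i, Preserves (g i) R) :
    Preserves (fun x => f fun i => g i x) R :=
  fun r hr => hf (fun i j => g i fun i' => r i' j) (fun i => hg i r hr)

lemma preserves_minor {A : Type} {n r k : ℕ} {f : (Fin n → A) → A}
    (R : Set (Fin k → A)) (σ : Fin n → Fin r) (hf : Preserves f R) :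
    Preserves (Minor f σ) R :=
  fun rr hrr => hf (fun i => rr (σ i)) (fun i => hrr (σ i))

lemma isClone_cloGen {A : Type} {k : ℕ} (g : (Fin (k+1) → A) → A) :
    IsClone (CloGen g) where
  proj := fun n i D hD _ => hD.proj n i
  comp := fun n m f gs hf hgs D hD hg =>
    hD.comp n m f gs (hf D hD hg) (fun i => hgs i D hD hg)

/-! ### Direction 1 : `CloGen (dOp i) → CloneZ2` -/

def pr32 : Fin 3 → Fin 2 := fun v => if v = 1 then 1 else 0
def io23 : Fin 2 → Fin 3 := fun v => if v = 1 then 1 else 0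

def R4 : Set (Fin 4 → Fin 3) :=
  {t | (∀ j, t j ≠ 2) ∧ pr32 (t 3) = pr32 (t 0) + pr32 (t 1) + pr32 (t 2)}

def PolD : Ops (Fin 3) := fun _ =>
  {f | Preserves f R4 ∧ Preserves f (unRel {0}) ∧ Preserves f (unRel {1})}

lemma isClone_PolD : IsClone PolD where
  proj := fun _ i => ⟨preserves_proj i _, preserves_proj i _, preserves_proj i _⟩
  comp := fun n m f g hf hg =>
    ⟨preserves_comp f g _ hf.1 fun i => (hg i).1,
     preserves_comp f g _ hf.2.1 fun i => (hg i).2.1,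
     preserves_comp f g _ hf.2.2 fun i => (hg i).2.2⟩

lemma dOp_key : ∀ (i : Fin 3) (v : Fin 3 → Fin 3), (∀ j, v j ≠ 2) →
    dOp i v ≠ 2 ∧ pr32 (dOp i v) = pr32 (v 0) + pr32 (v 1) + pr32 (v 2) := by decide

lemma dOp_unary : ∀ (i : Fin 3) (v : Fin 3), dOp i (fun _ => v) = v := by decide

open Fin.CommRing in
lemma dOp_mem_PolD (i : Fin 3) : dOp i ∈ PolD 2 := by
  refine ⟨?_, ?_, ?_⟩
  · intro r hr
    have hcol : ∀ j : Fin 4, ∀ i', (fun i' => r i' j) i' ≠ 2 := fun j i' => (hr i').1 j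
    refine ⟨fun j => (dOp_key i _ (hcol j)).1, ?_⟩
    have e0 := (dOp_key i (fun i' => r i' 0) (hcol 0)).2
    have e1 := (dOp_key i (fun i' => r i' 1) (hcol 1)).2
    have e2 := (dOp_key i (fun i' => r i' 2) (hcol 2)).2
    have e3 := (dOp_key i (fun i' => r i' 3) (hcol 3)).2
    show pr32 (dOp i fun i' => r i' 3) = _
    rw [e0, e1, e2, e3, (hr 0).2, (hr 1).2, (hr 2).2]
    ring
  · intro r hr
    show dOp i (fun i' => r i' 0) ∈ ({0} : Set (Fin 3))
    have : (fun i' => r i' 0) = fun _ => (0 : Fin 3) := funext fun i' => hr i'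
    rw [this, dOp_unary]
    rfl
  · intro r hr
    show dOp i (fun i' => r i' 0) ∈ ({1} : Set (Fin 3))
    have : (fun i' => r i' 0) = fun _ => (1 : Fin 3) := funext fun i' => hr i'
    rw [this, dOp_unary]
    rfl

lemma io23_ne2 : ∀ v : Fin 2, io23 v ≠ 2 := by decide
lemma pr_io : ∀ v : Fin 2, pr32 (io23 v) = v := by decide

lemma minorLE_d_Z2 (i : Fin 3) : MinorLE (CloGen (k := 2) (dOp i)) CloneZ2 := by
  refine ⟨fun n f x => pr32 (f fun j => io23 (x j)), ?_, fun _ _ _ _ _ => rfl⟩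
  intro n f hf
  have hD := hf PolD isClone_PolD (dOp_mem_PolD i)
  refine ⟨?_, ?_, ?_⟩
  · intro r hr
    have hrows : ∀ i', (fun i' j => io23 (r i' j)) i' ∈ R4 := by
      intro i'
      refine ⟨fun j => io23_ne2 _, ?_⟩
      show pr32 (io23 (r i' 3)) = _
      rw [pr_io, pr_io, pr_io, pr_io]
      exact hr i'
    exact (hD.1 (fun i' j => io23 (r i' j)) hrows).2
  · intro r hr
    have hrows : ∀ i', (fun i' (_ : Fin 1) => io23 (r i' 0)) i' ∈ unRel ({0} : Set (Fin 3)) := by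
      intro i'
      show io23 (r i' 0) ∈ ({0} : Set (Fin 3))
      have : r i' 0 = 0 := hr i'
      rw [this]; rfl
    have H := hD.2.1 (fun i' (_ : Fin 1) => io23 (r i' 0)) hrows
    show pr32 (f fun i' => io23 (r i' 0)) ∈ ({0} : Set (Fin 2))
    have : f (fun i' => io23 (r i' 0)) = 0 := H
    rw [this]; rfl
  · intro r hr
    have hrows : ∀ i', (fun i' (_ : Fin 1) => io23 (r i' 0)) i' ∈ unRel ({1} : Set (Fin 3)) := by
      intro i'
      show io23 (r i' 0) ∈ ({1} : Set (Fin 3))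
      have : r i' 0 = 1 := hr i'
      rw [this]; rfl
    have H := hD.2.2 (fun i' (_ : Fin 1) => io23 (r i' 0)) hrows
    show pr32 (f fun i' => io23 (r i' 0)) ∈ ({1} : Set (Fin 2))
    have : f (fun i' => io23 (r i' 0)) = 1 := H
    rw [this]; rfl

/-! ### Characterization of members of `CloneZ2` -/

def eB {m : ℕ} (j : Fin m) : Fin m → Fin 2 := fun j' => if j' = j then 1 else 0

def Sof {n : ℕ} (f : (Fin (n+1) → Fin 2) → Fin 2) : Finset (Fin (n+1)) :=
  Finset.univ.filter fun j => f (eB j) = 1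

lemma fin2_cases : ∀ v : Fin 2, v = 0 ∨ v = 1 := by decide

lemma z2_zero {n : ℕ} {f : (Fin (n+1) → Fin 2) → Fin 2} (hf : f ∈ CloneZ2 n) :
    f (fun _ => 0) = 0 :=
  hf.2.1 (fun _ _ => 0) (fun _ => rfl)

lemma z2_one {n : ℕ} {f : (Fin (n+1) → Fin 2) → Fin 2} (hf : f ∈ CloneZ2 n) :
    f (fun _ => 1) = 1 :=
  hf.2.2 (fun _ _ => 1) (fun _ => rfl)

lemma z2_add3 {n : ℕ} {f : (Fin (n+1) → Fin 2) → Fin 2} (hf : f ∈ CloneZ2 n)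
    (x y z : Fin (n+1) → Fin 2) :
    f (fun j => x j + y j + z j) = f x + f y + f z := by
  have H := hf.1 (fun i (j : Fin 4) =>
      if j = 0 then x i else if j = 1 then y i else if j = 2 then z i else x i + y i + z i)
    (fun i => rfl)
  exact H

lemma z2_add2 {n : ℕ} {f : (Fin (n+1) → Fin 2) → Fin 2} (hf : f ∈ CloneZ2 n)
    (x y : Fin (n+1) → Fin 2) :
    f (fun j => x j + y j) = f x + f y := by
  have h := z2_add3 hf x y (fun _ => 0)
  rw [z2_zero hf, add_zero] at h
  simpa only [add_zero] using h

open Fin.CommRing in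
lemma z2_support {n : ℕ} {f : (Fin (n+1) → Fin 2) → Fin 2} (hf : f ∈ CloneZ2 n) :
    ∀ (s : Finset (Fin (n+1))) (v : Fin (n+1) → Fin 2), (∀ j ∉ s, v j = 0) →
      f v = ∑ j ∈ s, (if v j = 1 then f (eB j) else 0) := by
  intro s
  induction s using Finset.induction_on with
  | empty =>
    intro v hv
    have : v = fun _ => 0 := funext fun j => hv j (Finset.notMem_empty j)
    rw [this, z2_zero hf, Finset.sum_empty]
  | @insert a s' ha ih =>
    intro v hv
    by_cases hva : v a = 1
    · set v' : Fin (n+1) → Fin 2 := fun j => if j = a then 0 else v j with hv'def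
      have hv' : ∀ j ∉ s', v' j = 0 := by
        intro j hj
        by_cases h : j = a
        · simp [hv'def, h]
        · simp only [hv'def, if_neg h]
          exact hv j (by simp [Finset.mem_insert, h, hj])
      have hveq : v = fun j => v' j + eB a j := by
        funext j
        by_cases h : j = a
        · subst h; simp [hv'def, eB, hva]
        · simp [hv'def, eB, h]
      have hfv : f v = f v' + f (eB a) := by
        rw [congrArg f hveq]; exact z2_add2 hf v' (eB a)
      rw [hfv, ih v' hv', Finset.sum_insert ha]
      have h1 : (if v a = 1 then f (eB a) else 0) = f (eB a) := by rw [if_pos hva]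
      have h2 : ∀ j ∈ s', (if v' j = 1 then f (eB j) else 0) = (if v j = 1 then f (eB j) else 0) := by
        intro j hj
        have : j ≠ a := fun h => ha (h ▸ hj)
        simp [hv'def, this]
      rw [Finset.sum_congr rfl h2, h1]
      ring
    · have hva0 : v a = 0 := (fin2_cases (v a)).resolve_right hva
      have hsup : ∀ j ∉ s', v j = 0 := by
        intro j hj
        by_cases h : j = a
        · exact h ▸ hva0
        · exact hv j (by simp [Finset.mem_insert, h, hj])
      rw [ih v hsup, Finset.sum_insert ha, if_neg hva, zero_add]

lemma z2_char {n : ℕ} {f : (Fin (n+1) → Fin 2) → Fin 2} (hf : f ∈ CloneZ2 n)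
    (v : Fin (n+1) → Fin 2) :
    f v = ∑ j ∈ Sof f, v j := by
  rw [z2_support hf Finset.univ v (by simp), Sof, Finset.sum_filter]
  apply Finset.sum_congr rfl
  intro j _
  rcases fin2_cases (f (eB j)) with h | h <;> rcases fin2_cases (v j) with h' | h' <;>
    rw [h, h'] <;> decide

open Fin.CommRing in
lemma cast_fin2 : ∀ m : ℕ, ((m : Fin 2)) = if m % 2 = 1 then 1 else 0 := by
  intro m
  induction m with
  | zero => rfl
  | succ m ih =>
    rw [Nat.cast_succ, ih]
    rcases Nat.mod_two_eq_zero_or_one m with h | h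
    · have h2 : (m+1) % 2 = 1 := by omega
      rw [if_neg (by omega), if_pos h2]; decide
    · have h2 : (m+1) % 2 = 0 := by omega
      rw [if_pos h, if_neg (by omega)]; decide

lemma cast_zmod2 : ∀ m : ℕ, ((m : ZMod 2)) = if m % 2 = 1 then 1 else 0 := by
  intro m
  induction m with
  | zero => rfl
  | succ m ih =>
    rw [Nat.cast_succ, ih]
    rcases Nat.mod_two_eq_zero_or_one m with h | h
    · have h2 : (m+1) % 2 = 1 := by omega
      rw [if_neg (by omega), if_pos h2]; decide
    · have h2 : (m+1) % 2 = 0 := by omega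
      rw [if_pos h, if_neg (by omega)]; decide

open Fin.CommRing in
lemma sof_odd {n : ℕ} {f : (Fin (n+1) → Fin 2) → Fin 2} (hf : f ∈ CloneZ2 n) :
    (Sof f).card % 2 = 1 := by
  have h1 : (∑ _j ∈ Sof f, (1 : Fin 2)) = 1 := by
    have h := z2_char hf (fun _ => 1)
    rw [z2_one hf] at h
    exact h.symm
  rw [Finset.sum_const, nsmul_eq_mul, mul_one, cast_fin2] at h1
  rcases Nat.mod_two_eq_zero_or_one ((Sof f).card) with h | h
  · rw [if_neg (by omega)] at h1
    exact absurd h1 (by decide)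
  · exact h

/-! ### The symmetric cancellative operations on `Fin 3` -/

def hh (i : Fin 3) (p : Fin 3 → ZMod 2) : Fin 3 :=
  if p 0 = 1 ∧ p 1 = 1 ∧ p 2 = 1 then i else if p 0 = 1 then 0 else if p 1 = 1 then 1 else 2

def ee3 (v : Fin 3) : Fin 3 → ZMod 2 := fun a => if v = a then 1 else 0

def gsym (i : Fin 3) {m : ℕ} : (Fin m → Fin 3) → Fin 3 :=
  fun x => hh i (fun aa => ∑ j, ee3 (x j) aa)

def Gop (i : Fin 3) {m : ℕ} (S : Finset (Fin m)) : (Fin m → Fin 3) → Fin 3 :=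
  fun x => hh i (fun aa => ∑ j ∈ S, ee3 (x j) aa)

lemma hh_ee : ∀ (i : Fin 3) (v : Fin 3), hh i (ee3 v) = v := by decide

theorem keyStep : ∀ (i : Fin 3) (q : Fin 3 → ZMod 2), q 0 + q 1 + q 2 = 0 → ∀ a b c : Fin 3,
    hh i (fun aa => q aa + ee3 a aa + ee3 b aa + ee3 c aa) =
      dOp i ![dOp i ![a, hh i (fun aa => q aa + ee3 a aa), dOp i ![a,b,c]],
              dOp i ![b, hh i (fun aa => q aa + ee3 b aa), dOp i ![a,b,c]],
              dOp i ![c, hh i (fun aa => q aa + ee3 c aa), dOp i ![a,b,c]]] := by decide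

lemma ee3_total : ∀ v : Fin 3, ee3 v 0 + ee3 v 1 + ee3 v 2 = 1 := by decide

lemma gsym_one (i : Fin 3) : gsym i (m := 1) = fun x => x 0 := by
  funext x
  show hh i (fun aa => ∑ j : Fin 1, ee3 (x j) aa) = x 0
  have h : (fun aa => ∑ j : Fin 1, ee3 (x j) aa) = ee3 (x 0) := by
    funext aa; rw [Fin.sum_univ_one]
  rw [h, hh_ee]

/-! auxiliary data for the induction step -/

def laF (t : ℕ) : Fin (2*t+3) := ⟨2*t, by omega⟩
def lbF (t : ℕ) : Fin (2*t+3) := ⟨2*t+1, by omega⟩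
def lcF (t : ℕ) : Fin (2*t+3) := ⟨2*t+2, by omega⟩
def embF (t : ℕ) : Fin (2*t) → Fin (2*t+3) := fun j => ⟨j.val, by omega⟩
def snocF (t : ℕ) (u : Fin (2*t+3)) : Fin (2*t+1) → Fin (2*t+3) :=
  Fin.snoc (α := fun _ => Fin (2*t+3)) (embF t) u

def OfunF (i : Fin 3) (t : ℕ) (u : Fin (2*t+3)) : (Fin (2*t+3) → Fin 3) → Fin 3 :=
  fun x => gsym i (fun j => x (snocF t u j))

def KfunF (i : Fin 3) (t : ℕ) : (Fin (2*t+3) → Fin 3) → Fin 3 :=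
  fun x => dOp i (fun j => x (![laF t, lbF t, lcF t] j))

def TfunF (i : Fin 3) (t : ℕ) (u : Fin (2*t+3)) : (Fin (2*t+3) → Fin 3) → Fin 3 :=
  fun x => dOp i (fun j => (![fun y => y u, OfunF i t u, KfunF i t] j) x)

lemma gsym_mem (i : Fin 3) {DD : Ops (Fin 3)} (hD : IsClone DD) (hd : dOp i ∈ DD 2) :
    ∀ t : ℕ, gsym i (m := 2*t+1) ∈ DD (2*t) := by
  intro t
  induction t with
  | zero => exact (gsym_one i) ▸ hD.proj 0 0
  | succ t ih =>
    show gsym i (m := 2*t+3) ∈ DD (2*t+2)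
    have hO : ∀ u, OfunF i t u ∈ DD (2*t+2) := fun u =>
      hD.comp (2*t) (2*t+2) (gsym i) (fun j x => x (snocF t u j)) ih
        (fun j => hD.proj _ _)
    have hK : KfunF i t ∈ DD (2*t+2) :=
      hD.comp 2 (2*t+2) (dOp i) (fun j x => x (![laF t, lbF t, lcF t] j)) hd
        (fun j => hD.proj _ _)
    have hT : ∀ u, TfunF i t u ∈ DD (2*t+2) := by
      intro u
      refine hD.comp 2 (2*t+2) (dOp i) _ hd ?_
      intro j
      fin_cases j
      · exact hD.proj _ u
      · exact hO u
      · exact hK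
    have hF : (fun x => dOp i (fun j => (![TfunF i t (laF t), TfunF i t (lbF t), TfunF i t (lcF t)] j) x))
        ∈ DD (2*t+2) := by
      refine hD.comp 2 (2*t+2) (dOp i) _ hd ?_
      intro j
      fin_cases j
      · exact hT (laF t)
      · exact hT (lbF t)
      · exact hT (lcF t)
    have hEq : gsym i (m := 2*t+3) =
        (fun x => dOp i (fun j => (![TfunF i t (laF t), TfunF i t (lbF t), TfunF i t (lcF t)] j) x)) := by
      funext x
      set q : Fin 3 → ZMod 2 := fun aa => ∑ j : Fin (2*t), ee3 (x (embF t j)) aa with hq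
      have heven : q 0 + q 1 + q 2 = 0 := by
        rw [hq]
        rw [← Finset.sum_add_distrib, ← Finset.sum_add_distrib]
        rw [Finset.sum_congr rfl (fun j _ => ee3_total (x (embF t j)))]
        rw [Finset.sum_const, Finset.card_univ, Fintype.card_fin, nsmul_eq_mul, mul_one,
          cast_zmod2 (2*t), if_neg (by omega)]
      have hOval : ∀ u : Fin (2*t+3), OfunF i t u x = hh i (fun aa => q aa + ee3 (x u) aa) := by
        intro u
        show hh i (fun aa => ∑ j : Fin (2*t+1), ee3 (x (snocF t u j)) aa)
          = hh i (fun aa => q aa + ee3 (x u) aa)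
        congr 1
        funext aa
        rw [Fin.sum_univ_castSucc (n := 2*t)]
        simp only [snocF, Fin.snoc_castSucc, Fin.snoc_last]
        rfl
      have hKval : KfunF i t x = dOp i ![x (laF t), x (lbF t), x (lcF t)] := by
        show dOp i _ = dOp i _
        congr 1
        funext j
        fin_cases j <;> rfl
      have hTval : ∀ u : Fin (2*t+3),
          TfunF i t u x = dOp i ![x u, hh i (fun aa => q aa + ee3 (x u) aa),
            dOp i ![x (laF t), x (lbF t), x (lcF t)]] := by
        intro u
        show dOp i _ = dOp i _
        congr 1
        funext j
        fin_cases j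
        · rfl
        · show OfunF i t u x = _; rw [hOval u]; rfl
        · show KfunF i t x = _; rw [hKval]; rfl
      have hfull : (fun aa => ∑ j : Fin (2*t+3), ee3 (x j) aa) =
          (fun aa => q aa + ee3 (x (laF t)) aa + ee3 (x (lbF t)) aa + ee3 (x (lcF t)) aa) := by
        funext aa
        rw [Fin.sum_univ_castSucc (n := 2*t+2), Fin.sum_univ_castSucc (n := 2*t+1),
          Fin.sum_univ_castSucc (n := 2*t)]
        have e1 : ∀ j : Fin (2*t), ((j.castSucc).castSucc).castSucc = embF t j :=
          fun j => Fin.ext (by simp [embF])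
        have e2 : ((Fin.last (2*t)).castSucc).castSucc = laF t := Fin.ext (by simp [laF])
        have e3 : (Fin.last (2*t+1)).castSucc = lbF t := Fin.ext (by simp [lbF])
        have e4 : Fin.last (2*t+2) = lcF t := Fin.ext (by simp [lcF])
        rw [Finset.sum_congr rfl (fun j _ => by rw [e1 j]), e2, e3, e4, hq]
      show hh i _ = _
      rw [hfull, keyStep i q heven (x (laF t)) (x (lbF t)) (x (lcF t))]
      show dOp i _ = dOp i _
      congr 1
      funext j
      fin_cases j
      · show _ = TfunF i t (laF t) x; rw [hTval (laF t)]; rfl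
      · show _ = TfunF i t (lbF t) x; rw [hTval (lbF t)]; rfl
      · show _ = TfunF i t (lcF t) x; rw [hTval (lcF t)]; rfl
    rw [hEq]
    exact hF

/-! ### Direction 2 : `CloneZ2 → CloGen (dOp i)` -/

lemma gop_eq_gsym (i : Fin 3) {m t : ℕ} (S : Finset (Fin m)) (hcard : S.card = 2*t+1) :
    Gop i S = fun x => gsym i (fun k => x ((S.orderIsoOfFin hcard k : Fin m))) := by
  funext x
  show hh i _ = hh i _
  congr 1
  funext aa
  rw [← Finset.sum_coe_sort S (fun j => ee3 (x j) aa)]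
  exact (Equiv.sum_comp (S.orderIsoOfFin hcard).toEquiv
    (fun s : {y // y ∈ S} => ee3 (x s) aa)).symm

lemma gop_mem (i : Fin 3) {n : ℕ} (S : Finset (Fin (n+1))) (hodd : S.card % 2 = 1) :
    Gop i S ∈ CloGen (k := 2) (dOp i) n := by
  intro DD hD hd
  obtain ⟨t, ht⟩ : ∃ t, S.card = 2*t+1 := ⟨S.card / 2, by omega⟩
  rw [gop_eq_gsym i S ht]
  exact hD.comp (2*t) n (gsym i) (fun k x => x ((S.orderIsoOfFin ht k : Fin (n+1))))
    (gsym_mem i hD hd t) (fun k => hD.proj n _)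

lemma minor_mem_Z2 {n r : ℕ} {f : (Fin (n+1) → Fin 2) → Fin 2}
    (σ : Fin (n+1) → Fin (r+1)) (hf : f ∈ CloneZ2 n) : Minor f σ ∈ CloneZ2 r :=
  ⟨preserves_minor _ σ hf.1, preserves_minor _ σ hf.2.1, preserves_minor _ σ hf.2.2⟩

open Fin.CommRing in
lemma minorLE_Z2_d (i : Fin 3) : MinorLE CloneZ2 (CloGen (k := 2) (dOp i)) := by
  refine ⟨fun n f => Gop i (Sof f), ?_, ?_⟩
  · intro n f hf
    exact gop_mem i (Sof f) (sof_odd hf)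
  · intro n r f σ hf
    show Gop i (Sof (Minor f σ)) = Minor (Gop i (Sof f)) σ
    have hmem : ∀ j' : Fin (r+1),
        (Minor f σ) (eB j') = (((Sof f).filter (fun j => σ j = j')).card : Fin 2) := by
      intro j'
      have h := z2_char hf (fun j'' => eB j' (σ j''))
      rw [show (Minor f σ) (eB j') = f (fun j'' => eB j' (σ j'')) from rfl, h]
      simp only [eB]
      rw [Finset.sum_boole]
    funext x
    show hh i (fun aa => ∑ j ∈ Sof (Minor f σ), ee3 (x j) aa)
      = hh i (fun aa => ∑ j ∈ Sof f, ee3 (x (σ j)) aa)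
    congr 1
    funext aa
    calc (∑ j' ∈ Sof (Minor f σ), ee3 (x j') aa)
        = ∑ j' ∈ Finset.univ, (if (Minor f σ) (eB j') = 1 then ee3 (x j') aa else 0) := by
          rw [Sof, Finset.sum_filter]
      _ = ∑ j' ∈ Finset.univ,
            ((((Sof f).filter (fun j => σ j = j')).card : ZMod 2) * ee3 (x j') aa) := by
          apply Finset.sum_congr rfl
          intro j' _
          rw [hmem j', cast_fin2]
          rcases Nat.mod_two_eq_zero_or_one (((Sof f).filter (fun j => σ j = j')).card)
            with h | h <;> simp [h, cast_zmod2]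
      _ = ∑ j' ∈ Finset.univ,
            (∑ j ∈ (Sof f).filter (fun j => σ j = j'), ee3 (x (σ j)) aa) := by
          apply Finset.sum_congr rfl
          intro j' _
          rw [Finset.sum_congr rfl
            (fun j hj => by rw [(Finset.mem_filter.mp hj).2] :
              ∀ j ∈ (Sof f).filter (fun j => σ j = j'),
                ee3 (x (σ j)) aa = ee3 (x j') aa)]
          rw [Finset.sum_const, nsmul_eq_mul]
      _ = ∑ j ∈ Sof f, ee3 (x (σ j)) aa :=
          Finset.sum_fiberwise_of_maps_to (fun j _ => Finset.mem_univ (σ j)) _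

/-- For every `i ∈ {0,1,2}`, the clone generated by `d_i` is minor-equivalent to `𝒵₂`. -/
theorem stmt5 : ∀ i : Fin 3, MinorEquiv (CloGen (k := 2) (dOp i)) CloneZ2 := by
  intro i
  exact ⟨minorLE_d_Z2 i, minorLE_Z2_d i⟩
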